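/- Let u be a finite nonempty non-periodic word over alphabet {a,b}, W = u^∞, and suppose v_0, v_1, ..., v_n are all forks of W (including the empty word Λ and treating W itself as fork v_0), ordered so that z(v_0) ≤ z(v_1) ≤ ... ≤ z(v_n), where z(Λ) = |u| and z(W) := 1. Then z(v_1) = 2. -/

import Mathlib

open Classical

/-- `v` occurs in the periodic bi-infinite word `u^∞` starting at position `i`
(positions taken modulo the period `|u|`). -/
def OccAt {α : Type*} (u : List α) (i : ℕ) (v : List α) : Prop :=
  ∀ j, j < v.length → v[j]? = u[(i + j) % u.length]?

/-- `v` is a subword (contiguous factor) of `u^∞`. -/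
def Occurs {α : Type*} (u : List α) (v : List α) : Prop :=
  ∃ i < u.length, OccAt u i v

/-- The significance `z(v)`: the number of occurrences of `v` per period of `u^∞`. -/
noncomputable def z {α : Type*} (u : List α) (v : List α) : ℕ :=
  ((Finset.range u.length).filter fun i => OccAt u i v).card

/-- The alphabet letters a and b, modeled as the booleans. -/
notation "la" => true
notation "lb" => false

/-- A finite fork of W = u^∞ over {a,b}: a word v such that va, vb, av, bv all
occur in W. -/
def IsFork (u : List Bool) (v : List Bool) : Prop :=
  Occurs u (v ++ [la]) ∧ Occurs u (v ++ [lb]) ∧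
    Occurs u (la :: v) ∧ Occurs u (lb :: v)

namespace Stmt19Aux

/-- The bi-infinite word as a function: letter at position `k` (mod the period). -/
noncomputable def F (u : List Bool) (k : ℕ) : Option Bool := u[k % u.length]?

variable {u : List Bool}

lemma F_add_len (k : ℕ) : F u (k + u.length) = F u k := by
  simp [F, Nat.add_mod_right]

lemma F_period {c : ℕ} (hc : ∀ k, F u (k + c) = F u k) :
    ∀ s k, F u (k + s * c) = F u k := by
  intro s
  induction s with
  | zero => simp
  | succ s ih =>
      intro k
      have h : k + (s + 1) * c = (k + s * c) + c := by ring
      rw [h, hc, ih]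

lemma F_add_mul_len (s k : ℕ) : F u (k + s * u.length) = F u k :=
  F_period (fun k => F_add_len k) s k

lemma occAt_prefix {i : ℕ} {x y : List Bool} (h : OccAt u i (x ++ y)) : OccAt u i x := by
  intro j hj
  have hj' : j < (x ++ y).length := by simp; omega
  have := h j hj'
  rwa [List.getElem?_append_left hj] at this

lemma occurs_prefix {x y : List Bool} (h : Occurs u (x ++ y)) : Occurs u x := by
  obtain ⟨i, hi, h⟩ := h
  exact ⟨i, hi, occAt_prefix h⟩

lemma occAt_snoc {i : ℕ} {c : Bool} {v : List Bool} :
    OccAt u i (v ++ [c]) ↔ OccAt u i v ∧ F u (i + v.length) = some c := by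
  constructor
  · intro h
    refine ⟨occAt_prefix h, ?_⟩
    have := h v.length (by simp)
    rw [List.getElem?_concat_length] at this
    exact this.symm
  · rintro ⟨h1, h2⟩ j hj
    simp only [List.length_append, List.length_singleton] at hj
    rcases lt_or_eq_of_le (Nat.lt_succ_iff.mp hj) with hlt | heq
    · rw [List.getElem?_append_left hlt]; exact h1 j hlt
    · subst heq; rw [List.getElem?_concat_length]; exact h2.symm

lemma occAt_cons {i : ℕ} {c : Bool} {v : List Bool} :
    OccAt u i (c :: v) ↔ F u i = some c ∧ OccAt u ((i + 1) % u.length) v := by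
  constructor
  · intro h
    refine ⟨?_, ?_⟩
    · have := h 0 (by simp)
      simpa [F] using this.symm
    · intro j hj
      have h' := h (j + 1) (by simp; omega)
      simp only [List.getElem?_cons_succ] at h'
      rw [h']
      show u[_]? = u[_]?
      rw [Nat.mod_add_mod]
      have : i + 1 + j = i + (j + 1) := by omega
      rw [this]
  · rintro ⟨h1, h2⟩ j hj
    cases j with
    | zero => simpa [F] using h1.symm
    | succ j =>
        simp only [List.length_cons] at hj
        have h' := h2 j (by omega)
        simp only [List.getElem?_cons_succ]
        rw [h']
        show u[_]? = u[_]?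
        rw [Nat.mod_add_mod]
        have : i + 1 + j = i + (j + 1) := by omega
        rw [this]

lemma z_pos_iff (v : List Bool) : 0 < z u v ↔ Occurs u v := by
  simp [z, Finset.card_pos, Finset.filter_nonempty_iff, Occurs]

lemma z_snoc (hu : u ≠ []) (v : List Bool) :
    z u v = z u (v ++ [la]) + z u (v ++ [lb]) := by
  have hp : 0 < u.length := List.length_pos_iff.mpr hu
  have hsplit : (Finset.range u.length).filter (fun i => OccAt u i v)
      = ((Finset.range u.length).filter fun i => OccAt u i (v ++ [la]))
        ∪ ((Finset.range u.length).filter fun i => OccAt u i (v ++ [lb])) := by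
    ext i
    simp only [Finset.mem_union, Finset.mem_filter, Finset.mem_range]
    constructor
    · rintro ⟨hi, hocc⟩
      have hlt : (i + v.length) % u.length < u.length := Nat.mod_lt _ hp
      have hF : F u (i + v.length) = some (u.get ⟨(i + v.length) % u.length, hlt⟩) :=
        List.getElem?_eq_getElem hlt
      cases hb : u.get ⟨(i + v.length) % u.length, hlt⟩
      · right; exact ⟨hi, occAt_snoc.mpr ⟨hocc, by rw [hF, hb]⟩⟩
      · left; exact ⟨hi, occAt_snoc.mpr ⟨hocc, by rw [hF, hb]⟩⟩
    · rintro (⟨hi, hocc⟩ | ⟨hi, hocc⟩)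
      · exact ⟨hi, occAt_prefix hocc⟩
      · exact ⟨hi, occAt_prefix hocc⟩
  have hdisj : Disjoint
      ((Finset.range u.length).filter fun i => OccAt u i (v ++ [la]))
      ((Finset.range u.length).filter fun i => OccAt u i (v ++ [lb])) := by
    rw [Finset.disjoint_left]
    intro i hA hB
    have hA' := (Finset.mem_filter.mp hA).2
    have hB' := (Finset.mem_filter.mp hB).2
    have h1 := (occAt_snoc.mp hA').2
    have h2 := (occAt_snoc.mp hB').2
    rw [h1] at h2
    simp at h2
  show ((Finset.range u.length).filter fun i => OccAt u i v).card = _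
  rw [hsplit, Finset.card_union_of_disjoint hdisj]
  rfl

/-- Right special factors. -/
def RS (u v : List Bool) : Prop := Occurs u (v ++ [la]) ∧ Occurs u (v ++ [lb])

lemma two_le_z_of_RS {v : List Bool} (h : RS u v) : 2 ≤ z u v := by
  obtain ⟨⟨i1, hi1, h1⟩, ⟨i2, hi2, h2⟩⟩ := h
  have hne : i1 ≠ i2 := by
    intro he
    subst he
    have e1 := (occAt_snoc.mp h1).2
    have e2 := (occAt_snoc.mp h2).2
    rw [e1] at e2
    simp at e2
  have hsub : ({i1, i2} : Finset ℕ) ⊆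
      (Finset.range u.length).filter fun i => OccAt u i v := by
    intro i hi
    simp only [Finset.mem_insert, Finset.mem_singleton] at hi
    rcases hi with rfl | rfl
    · exact Finset.mem_filter.mpr ⟨Finset.mem_range.mpr hi1, occAt_prefix h1⟩
    · exact Finset.mem_filter.mpr ⟨Finset.mem_range.mpr hi2, occAt_prefix h2⟩
  calc 2 = ({i1, i2} : Finset ℕ).card := (Finset.card_pair hne).symm
    _ ≤ _ := Finset.card_le_card hsub

lemma join_replicate_get? {w : List Bool} (hw : 0 < w.length) :
    ∀ (m k : ℕ), ((List.replicate m w).flatten)[k]?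
      = if k < m * w.length then w[k % w.length]? else none := by
  intro m
  induction m with
  | zero => intro k; simp
  | succ m ih =>
      intro k
      rw [List.replicate_succ]
      show (w ++ (List.replicate m w).flatten)[k]? = _
      by_cases hk : k < w.length
      · rw [List.getElem?_append_left hk, if_pos (by rw [Nat.succ_mul]; omega),
          Nat.mod_eq_of_lt hk]
      · have hk' : w.length ≤ k := le_of_not_gt hk
        rw [List.getElem?_append_right hk', ih (k - w.length)]
        have hmod : (k - w.length) % w.length = k % w.length :=
          (Nat.mod_eq_sub_mod hk').symm
        rw [hmod]
        have hiff : (k - w.length < m * w.length) ↔ (k < (m + 1) * w.length) := by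
          rw [Nat.succ_mul]; omega
        by_cases h2 : k < (m + 1) * w.length
        · rw [if_pos (hiff.mpr h2), if_pos h2]
        · rw [if_neg (fun hq => h2 (hiff.mp hq)), if_neg h2]

/-- If the period word is invariant under a nontrivial rotation, it is a proper power. -/
lemma power_of_rot (hu : u ≠ []) {d : ℕ} (hd : 0 < d) (hdp : d < u.length)
    (h : ∀ k, F u (k + d) = F u k) :
    ∃ (w : List Bool) (m : ℕ), 2 ≤ m ∧ u = (List.replicate m w).flatten := by
  have hp : 0 < u.length := List.length_pos_iff.mpr hu
  set p := u.length with hpdef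
  set g := Nat.gcd d p with hgdef
  have hg : 0 < g := Nat.gcd_pos_of_pos_left _ hd
  have hgle : g ≤ d := Nat.gcd_le_left _ hd
  have hglt : g < p := lt_of_le_of_lt hgle hdp
  have hgdvd : g ∣ p := Nat.gcd_dvd_right d p
  obtain ⟨t, -, ht⟩ := Nat.exists_mul_mod_eq_gcd (k := p) (n := d) hglt
  have hFg : ∀ k, F u (k + g) = F u k := by
    intro k
    have h1 : F u (k + t * d) = F u k := F_period h t k
    have h2 : d * t = p * (d * t / p) + g := by
      conv_lhs => rw [← Nat.div_add_mod (d * t) p]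
      rw [ht]
    have h3 : k + t * d = (k + g) + (d * t / p) * p := by
      conv_lhs => rw [mul_comm t d, h2]
      ring
    rw [h3, F_add_mul_len] at h1
    exact h1
  have hFmul : ∀ s k, F u (k + s * g) = F u k := F_period hFg
  have hFmod : ∀ k, F u k = F u (k % g) := by
    intro k
    conv_lhs => rw [← Nat.mod_add_div' k g]
    exact hFmul (k / g) (k % g)
  refine ⟨u.take g, p / g, ?_, ?_⟩
  · have hmul := Nat.div_mul_cancel hgdvd
    rcases Nat.lt_or_ge (p / g) 2 with hlt | hge
    · interval_cases h : p / g <;> omega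
    · exact hge
  · have hwlen : (u.take g).length = g := by
      rw [List.length_take]; omega
    apply List.ext_getElem?
    intro k
    rw [join_replicate_get? (by omega), hwlen, Nat.div_mul_cancel hgdvd]
    by_cases hk : k < p
    · rw [if_pos hk]
      have hkg : k % g < g := Nat.mod_lt _ hg
      rw [List.getElem?_take_of_lt hkg]
      have h1 : u[k]? = F u k := by rw [F, Nat.mod_eq_of_lt hk]
      have h2 : u[k % g]? = F u (k % g) := by
        rw [F, Nat.mod_eq_of_lt (lt_trans hkg hglt)]
      rw [h1, h2]
      exact hFmod k
    · rw [if_neg hk, List.getElem?_eq_none_iff.mpr (by omega)]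

/-- A factor with at least two occurrences per period has length < the period. -/
lemma len_lt_of_two_le_z (hu : u ≠ [])
    (hnp : ¬ ∃ (w : List Bool) (m : ℕ), 2 ≤ m ∧ u = (List.replicate m w).flatten)
    {v : List Bool} (h2 : 2 ≤ z u v) : v.length < u.length := by
  by_contra hlen
  push_neg at hlen
  have hp : 0 < u.length := List.length_pos_iff.mpr hu
  have h2' : 1 < ((Finset.range u.length).filter fun i => OccAt u i v).card := by
    unfold z at h2; omega
  obtain ⟨i1, hm1, i2, hm2, hne⟩ := Finset.one_lt_card.mp h2'
  have hi1 := Finset.mem_filter.mp hm1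
  have hi2 := Finset.mem_filter.mp hm2
  have key : ∀ a b : ℕ, a < u.length → b < u.length → OccAt u a v → OccAt u b v →
      a < b → False := by
    intro a b hap hbp ha hb hab
    set d := b - a with hddef
    have hd : 0 < d := by omega
    have hdp : d < u.length := by omega
    have hocc_eq : ∀ j, j < u.length → F u (a + j) = F u (b + j) := by
      intro j hj
      have hjv : j < v.length := by omega
      have e1 := ha j hjv
      have e2 := hb j hjv
      show u[_]? = u[_]?
      rw [← e1, ← e2]
    have hall_j : ∀ j, F u (a + j) = F u (b + j) := by
      intro j
      have e1 : a + j = (a + j % u.length) + (j / u.length) * u.length := by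
        conv_lhs => rw [← Nat.mod_add_div j u.length]
        ring
      have e2 : b + j = (b + j % u.length) + (j / u.length) * u.length := by
        conv_lhs => rw [← Nat.mod_add_div j u.length]
        ring
      rw [e1, e2, F_add_mul_len, F_add_mul_len]
      exact hocc_eq (j % u.length) (Nat.mod_lt _ hp)
    have hrot : ∀ k, F u (k + d) = F u k := by
      intro k
      have e1 : k + u.length = a + (k + u.length - a) := by omega
      have e2 : b + (k + u.length - a) = (k + d) + u.length := by omega
      calc F u (k + d) = F u ((k + d) + u.length) := (F_add_len _).symm
        _ = F u (b + (k + u.length - a)) := by rw [e2]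
        _ = F u (a + (k + u.length - a)) := (hall_j _).symm
        _ = F u (k + u.length) := by rw [← e1]
        _ = F u k := F_add_len _
    exact hnp (power_of_rot hu hd hdp hrot)
  rcases Nat.lt_or_ge i1 i2 with h | h
  · exact key i1 i2 (Finset.mem_range.mp hi1.1) (Finset.mem_range.mp hi2.1) hi1.2 hi2.2 h
  · have h' : i2 < i1 := by omega
    exact key i2 i1 (Finset.mem_range.mp hi2.1) (Finset.mem_range.mp hi1.1) hi2.2 hi1.2 h'

lemma exists_RS (hu : u ≠ [])
    (hnp : ¬ ∃ (w : List Bool) (m : ℕ), 2 ≤ m ∧ u = (List.replicate m w).flatten) :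
    ∀ (K : ℕ) (v : List Bool), u.length - v.length ≤ K → 2 ≤ z u v →
      ∃ r, RS u r ∧ v.length ≤ r.length := by
  intro K
  induction K with
  | zero =>
      intro v hK h2
      have := len_lt_of_two_le_z hu hnp h2
      omega
  | succ K ih =>
      intro v hK h2
      have hlen := len_lt_of_two_le_z hu hnp h2
      have hz := z_snoc hu v
      by_cases ha : 0 < z u (v ++ [la])
      · by_cases hb : 0 < z u (v ++ [lb])
        · exact ⟨v, ⟨(z_pos_iff _).mp ha, (z_pos_iff _).mp hb⟩, le_refl _⟩
        · have h2' : 2 ≤ z u (v ++ [la]) := by omega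
          obtain ⟨r, hr, hle⟩ := ih (v ++ [la])
            (by simp only [List.length_append, List.length_singleton]; omega) h2'
          refine ⟨r, hr, ?_⟩
          simp only [List.length_append, List.length_singleton] at hle
          omega
      · have h2' : 2 ≤ z u (v ++ [lb]) := by omega
        obtain ⟨r, hr, hle⟩ := ih (v ++ [lb])
          (by simp only [List.length_append, List.length_singleton]; omega) h2'
        refine ⟨r, hr, ?_⟩
        simp only [List.length_append, List.length_singleton] at hle
        omega

end Stmt19Aux

open Stmt19Aux

/-- Let u be nonempty and non-periodic, W = u^∞, and let vs 0, ..., vs (n-1) enumerate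
all the finite forks of W in nondecreasing order of significance (these are the forks
v_1, ..., v_n of the paper; the fork v_0 = W itself has significance 1). Then the
least significance of a finite fork is 2, i.e. z(v_1) = 2. -/
theorem stmt_19 (u : List Bool) (hu : u ≠ [])
    (hnp : ¬ ∃ (w : List Bool) (m : ℕ), 2 ≤ m ∧ u = (List.replicate m w).flatten)
    (n : ℕ) (hn : 0 < n) (vs : Fin n → List Bool)
    (hinj : Function.Injective vs)
    (hall : ∀ v : List Bool, IsFork u v ↔ ∃ i, vs i = v)
    (hmono : ∀ i j : Fin n, i ≤ j → z u (vs i) ≤ z u (vs j)) :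
    z u (vs ⟨0, hn⟩) = 2 := by
  have hp : 0 < u.length := List.length_pos_iff.mpr hu
  have hfork0 : IsFork u (vs ⟨0, hn⟩) := (hall _).mpr ⟨_, rfl⟩
  have hRSnil : RS u ([] : List Bool) := by
    obtain ⟨-, -, hA, hB⟩ := hfork0
    exact ⟨occurs_prefix (x := [la]) (y := vs ⟨0, hn⟩) hA,
      occurs_prefix (x := [lb]) (y := vs ⟨0, hn⟩) hB⟩
  -- the finset of lengths of right-special factors
  set S : Finset ℕ := (Finset.range u.length).filter
      (fun k => ∃ v : List Bool, RS u v ∧ v.length = k) with hS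
  have h0S : 0 ∈ S := Finset.mem_filter.mpr ⟨Finset.mem_range.mpr hp, ⟨[], hRSnil, rfl⟩⟩
  have hSne : S.Nonempty := ⟨0, h0S⟩
  set L := S.max' hSne with hL
  obtain ⟨r, hrRS, hrlen⟩ : ∃ v : List Bool, RS u v ∧ v.length = L :=
    (Finset.mem_filter.mp (S.max'_mem hSne)).2
  have hmax : ∀ v : List Bool, RS u v → v.length ≤ L := by
    intro v hv
    exact S.le_max' _ (Finset.mem_filter.mpr
      ⟨Finset.mem_range.mpr (len_lt_of_two_le_z hu hnp (two_le_z_of_RS hv)), v, hv, rfl⟩)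
  -- z r = 2
  have hza : z u (r ++ [la]) = 1 := by
    have hpos : 0 < z u (r ++ [la]) := (z_pos_iff _).mpr hrRS.1
    by_contra hne1
    have h2 : 2 ≤ z u (r ++ [la]) := by omega
    obtain ⟨r', hr', hle⟩ := exists_RS hu hnp u.length (r ++ [la]) (by omega) h2
    have hmax' := hmax r' hr'
    simp only [List.length_append, List.length_singleton] at hle
    omega
  have hzb : z u (r ++ [lb]) = 1 := by
    have hpos : 0 < z u (r ++ [lb]) := (z_pos_iff _).mpr hrRS.2
    by_contra hne1
    have h2 : 2 ≤ z u (r ++ [lb]) := by omega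
    obtain ⟨r', hr', hle⟩ := exists_RS hu hnp u.length (r ++ [lb]) (by omega) h2
    have hmax' := hmax r' hr'
    simp only [List.length_append, List.length_singleton] at hle
    omega
  have hzr : z u r = 2 := by rw [z_snoc hu r, hza, hzb]
  -- the two occurrence positions of r
  have hcard : ((Finset.range u.length).filter fun i => OccAt u i r).card = 2 := by
    unfold z at hzr; exact hzr
  obtain ⟨i1, i2, hi12, hset⟩ := Finset.card_eq_two.mp hcard
  have hmem1 : i1 ∈ (Finset.range u.length).filter fun i => OccAt u i r := by
    rw [hset]; simp
  have hmem2 : i2 ∈ (Finset.range u.length).filter fun i => OccAt u i r := by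
    rw [hset]; simp
  have hi1p : i1 < u.length := Finset.mem_range.mp (Finset.mem_filter.mp hmem1).1
  have hi2p : i2 < u.length := Finset.mem_range.mp (Finset.mem_filter.mp hmem2).1
  have hocc1 : OccAt u i1 r := (Finset.mem_filter.mp hmem1).2
  have hocc2 : OccAt u i2 r := (Finset.mem_filter.mp hmem2).2
  have honly : ∀ i, i < u.length → OccAt u i r → i = i1 ∨ i = i2 := by
    intro i hi ho
    have hmem : i ∈ (Finset.range u.length).filter fun i => OccAt u i r :=
      Finset.mem_filter.mpr ⟨Finset.mem_range.mpr hi, ho⟩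
    rw [hset] at hmem
    simpa using hmem
  -- predecessor positions and letters
  set j1 := (i1 + u.length - 1) % u.length with hj1def
  set j2 := (i2 + u.length - 1) % u.length with hj2def
  have hj1p : j1 < u.length := Nat.mod_lt _ hp
  have hj2p : j2 < u.length := Nat.mod_lt _ hp
  have hsucc1 : (j1 + 1) % u.length = i1 := by
    rw [hj1def, Nat.mod_add_mod]
    have e : i1 + u.length - 1 + 1 = i1 + u.length := by omega
    rw [e, Nat.add_mod_right, Nat.mod_eq_of_lt hi1p]
  have hsucc2 : (j2 + 1) % u.length = i2 := by
    rw [hj2def, Nat.mod_add_mod]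
    have e : i2 + u.length - 1 + 1 = i2 + u.length := by omega
    rw [e, Nat.add_mod_right, Nat.mod_eq_of_lt hi2p]
  set c1 := u.get ⟨j1, hj1p⟩ with hc1def
  set c2 := u.get ⟨j2, hj2p⟩ with hc2def
  have hF1 : F u j1 = some c1 := by
    show u[_]? = _
    rw [Nat.mod_eq_of_lt hj1p]; exact List.getElem?_eq_getElem hj1p
  have hF2 : F u j2 = some c2 := by
    show u[_]? = _
    rw [Nat.mod_eq_of_lt hj2p]; exact List.getElem?_eq_getElem hj2p
  have hext1 : ∀ s : List Bool, OccAt u i1 s → OccAt u j1 (c1 :: s) := by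
    intro s hs
    exact occAt_cons.mpr ⟨hF1, by rw [hsucc1]; exact hs⟩
  have hext2 : ∀ s : List Bool, OccAt u i2 s → OccAt u j2 (c2 :: s) := by
    intro s hs
    exact occAt_cons.mpr ⟨hF2, by rw [hsucc2]; exact hs⟩
  -- the two preceding letters are distinct
  have hcne : c1 ≠ c2 := by
    intro hceq
    have hRS' : RS u (c1 :: r) := by
      constructor
      · obtain ⟨i, hi, ho⟩ := hrRS.1
        have hoccr : OccAt u i r := occAt_prefix ho
        rcases honly i hi hoccr with rfl | rfl
        · exact ⟨j1, hj1p, by rw [List.cons_append]; exact hext1 _ ho⟩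
        · exact ⟨j2, hj2p, by rw [List.cons_append, hceq]; exact hext2 _ ho⟩
      · obtain ⟨i, hi, ho⟩ := hrRS.2
        have hoccr : OccAt u i r := occAt_prefix ho
        rcases honly i hi hoccr with rfl | rfl
        · exact ⟨j1, hj1p, by rw [List.cons_append]; exact hext1 _ ho⟩
        · exact ⟨j2, hj2p, by rw [List.cons_append, hceq]; exact hext2 _ ho⟩
    have hle := hmax _ hRS'
    simp only [List.length_cons] at hle
    omega
  -- r is left special, hence a fork
  have hOa : Occurs u (la :: r) := by
    by_cases hb1 : c1 = true
    · refine ⟨j1, hj1p, ?_⟩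
      rw [← hb1]
      exact hext1 r hocc1
    · have hb2 : c2 = true := by
        cases hc2 : c2
        · cases hc1 : c1
          · exact absurd (hc1.trans hc2.symm) hcne
          · exact absurd hc1 hb1
        · rfl
      refine ⟨j2, hj2p, ?_⟩
      rw [← hb2]
      exact hext2 r hocc2
  have hOb : Occurs u (lb :: r) := by
    by_cases hb1 : c1 = false
    · refine ⟨j1, hj1p, ?_⟩
      rw [← hb1]
      exact hext1 r hocc1
    · have hb2 : c2 = false := by
        cases hc2 : c2
        · rfl
        · cases hc1 : c1
          · exact absurd hc1 hb1
          · exact absurd (hc1.trans hc2.symm) hcne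
      refine ⟨j2, hj2p, ?_⟩
      rw [← hb2]
      exact hext2 r hocc2
  have hfork : IsFork u r := ⟨hrRS.1, hrRS.2, hOa, hOb⟩
  obtain ⟨ir, hir⟩ := (hall r).mp hfork
  have hle0 : z u (vs ⟨0, hn⟩) ≤ z u r := by
    rw [← hir]
    exact hmono _ _ (Fin.le_def.mpr (Nat.zero_le _))
  have hge0 : 2 ≤ z u (vs ⟨0, hn⟩) := two_le_z_of_RS ⟨hfork0.1, hfork0.2.1⟩
  omega
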